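/- Every S_n-invariant subgroup V of K = (ℤ/2ℤ)^n is equal to one of the following four subgroups: the zero subgroup {0}, the whole group K, the two-element subgroup {0, e} generated by the all-ones vector e, or the hyperplane e^⊥ = {v ∈ K | v_1 + ⋯ + v_n = 0}. -/
import Mathlib

private lemma zmod2_cases' (x : ZMod 2) : x = 0 ∨ x = 1 := by revert x; decide

private lemma zmod2_add_self' (x : ZMod 2) : x + x = 0 := by revert x; decide

/-- Every `S_n`-invariant subgroup `V` of `K = (ℤ/2ℤ)^n` equals one of:
the zero subgroup, the whole group, the two-element subgroup generated by the all-ones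
vector `e`, or the hyperplane `e^⊥ = {v | v 1 + ⋯ + v n = 0}`. -/
theorem sn_invariant_subgroups (n : ℕ) (hn : 1 ≤ n)
    (V : AddSubgroup (Fin n → ZMod 2))
    (hV : ∀ σ : Equiv.Perm (Fin n), ∀ v ∈ V, (fun i => v (σ⁻¹ i)) ∈ V) :
    V = ⊥ ∨ V = ⊤ ∨
    V = AddSubgroup.closure {(fun _ => 1 : Fin n → ZMod 2)} ∨
    V = (∑ i : Fin n, Pi.evalAddMonoidHom (fun _ : Fin n => ZMod 2) i).ker := by
  classical
  set e : Fin n → ZMod 2 := fun _ => 1 with he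
  have Sapp : ∀ w : Fin n → ZMod 2,
      (∑ i : Fin n, Pi.evalAddMonoidHom (fun _ : Fin n => ZMod 2) i) w = ∑ i, w i := by
    intro w
    simp [AddMonoidHom.finset_sum_apply]
  by_cases hA : ∃ v ∈ V, v ≠ 0 ∧ v ≠ e
  · obtain ⟨v, hv, hv0, hve⟩ := hA
    obtain ⟨i, hi⟩ : ∃ i, v i = 1 := by
      by_contra h
      push_neg at h
      exact hv0 (funext fun k => (zmod2_cases' (v k)).resolve_right (h k))
    obtain ⟨j, hj⟩ : ∃ j, v j = 0 := by
      by_contra h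
      push_neg at h
      exact hve (funext fun k => (zmod2_cases' (v k)).resolve_left (h k))
    have hij : i ≠ j := fun h => by rw [h, hj] at hi; exact one_ne_zero hi.symm
    -- the basic pair e_i + e_j is in V
    have pair0 : (Pi.single i (1 : ZMod 2) + Pi.single j 1) ∈ V := by
      have h1 := hV (Equiv.swap i j) v hv
      have h2 := V.add_mem hv h1
      have heq : (v + fun k => v ((Equiv.swap i j)⁻¹ k)) =
          Pi.single i (1 : ZMod 2) + Pi.single j 1 := by
        funext k
        simp only [Pi.add_apply, Equiv.swap_inv, Pi.single_apply]
        by_cases hki : k = i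
        · subst hki
          rw [Equiv.swap_apply_left, hi, hj, if_pos rfl, if_neg hij]
        · by_cases hkj : k = j
          · subst hkj
            rw [Equiv.swap_apply_right, hi, hj, if_neg (Ne.symm hij), if_pos rfl,
              add_comm]
          · rw [Equiv.swap_apply_of_ne_of_ne hki hkj, if_neg hki, if_neg hkj,
              zmod2_add_self', add_zero]
      rwa [heq] at h2
    -- all pairs e_a + e_b (a ≠ b) are in V
    have pairs : ∀ a b : Fin n, a ≠ b →
        (Pi.single a (1 : ZMod 2) + Pi.single b 1) ∈ V := by
      intro a b hab
      set τ : Equiv.Perm (Fin n) := Equiv.swap i a with hτ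
      set σ : Equiv.Perm (Fin n) := Equiv.swap (τ j) b * τ with hσ
      have hτja : τ j ≠ a := by
        intro h
        have : τ j = τ i := by rw [h, hτ, Equiv.swap_apply_left]
        exact hij.symm (τ.injective this)
      have hσi : σ i = a := by
        rw [hσ, Equiv.Perm.mul_apply, hτ, Equiv.swap_apply_left,
          Equiv.swap_apply_of_ne_of_ne (Ne.symm hτja) hab]
      have hσj : σ j = b := by
        rw [hσ, Equiv.Perm.mul_apply, Equiv.swap_apply_left]
      have h1 := hV σ _ pair0
      have heq : (fun k => (Pi.single i (1 : ZMod 2) + Pi.single j 1 : Fin n → ZMod 2) (σ⁻¹ k)) =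
          Pi.single a (1 : ZMod 2) + Pi.single b 1 := by
        funext k
        simp only [Pi.add_apply, Pi.single_apply]
        have h1' : (σ⁻¹ k = i) = (k = a) := by
          rw [Equiv.Perm.inv_eq_iff_eq, hσi, eq_comm, eq_comm (a := k)]
        have h2' : (σ⁻¹ k = j) = (k = b) := by
          rw [Equiv.Perm.inv_eq_iff_eq, hσj, eq_comm, eq_comm (a := k)]
        simp only [h1', h2']
      rwa [heq] at h1
    -- the kernel of the sum is contained in V
    have ker_le : ∀ w : Fin n → ZMod 2, (∑ k, w k) = 0 → w ∈ V := by
      suffices H : ∀ m : ℕ, ∀ w : Fin n → ZMod 2,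
          (Finset.univ.filter (fun k => w k = 1)).card = m → (∑ k, w k) = 0 → w ∈ V by
        intro w hw
        exact H _ w rfl hw
      intro m
      induction m using Nat.strong_induction_on with
      | _ m ih =>
        intro w hcard hsum
        set s : Finset (Fin n) := Finset.univ.filter (fun k => w k = 1) with hs
        have hsumcard : (∑ k, w k) = (s.card : ZMod 2) := by
          have h1 : (∑ k, w k) = ∑ k ∈ s, w k := by
            rw [hs]
            rw [Finset.sum_filter_of_ne]
            intro k _ hk
            exact (zmod2_cases' (w k)).resolve_left hk
          rw [h1]
          have h2 : ∑ k ∈ s, w k = ∑ _k ∈ s, (1 : ZMod 2) := by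
            apply Finset.sum_congr rfl
            intro k hk
            rw [hs] at hk
            exact (Finset.mem_filter.mp hk).2
          rw [h2, Finset.sum_const, nsmul_eq_mul, mul_one]
        rcases Finset.eq_empty_or_nonempty s with hemp | ⟨a, ha⟩
        · have : w = 0 := by
            funext k
            have hk : k ∉ s := by rw [hemp]; exact Finset.notMem_empty k
            rw [hs, Finset.mem_filter] at hk
            push_neg at hk
            exact (zmod2_cases' (w k)).resolve_right (hk (Finset.mem_univ k))
          rw [this]; exact V.zero_mem
        · have hdvd : 2 ∣ s.card := by
            rw [← ZMod.natCast_eq_zero_iff, ← hsumcard]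
            exact hsum
          have hcard2 : 2 ≤ s.card := by
            rcases hdvd with ⟨c, hc⟩
            have : s.card ≠ 0 := Finset.card_ne_zero_of_mem ha
            omega
          obtain ⟨b, hb⟩ : (s.erase a).Nonempty := by
            rw [← Finset.card_pos, Finset.card_erase_of_mem ha]
            omega
          have hba : b ≠ a := Finset.ne_of_mem_erase hb
          have hbs : b ∈ s := Finset.mem_of_mem_erase hb
          have hwa : w a = 1 := by rw [hs, Finset.mem_filter] at ha; exact ha.2
          have hwb : w b = 1 := by rw [hs, Finset.mem_filter] at hbs; exact hbs.2
          set w' := w + Pi.single a 1 + Pi.single b 1 with hw'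
          have hw'val : ∀ k, w' k = if k = a ∨ k = b then 0 else w k := by
            intro k
            rw [hw']
            simp only [Pi.add_apply, Pi.single_apply]
            by_cases hka : k = a
            · subst hka
              rw [if_pos rfl, if_neg (fun h => hba h.symm), if_pos (Or.inl rfl), hwa]
              decide
            · by_cases hkb : k = b
              · subst hkb
                rw [if_neg hka, if_pos rfl, if_pos (Or.inr rfl), hwb]
                decide
              · rw [if_neg hka, if_neg hkb, if_neg (by tauto)]
                simp
          have hsub : (Finset.univ.filter (fun k => w' k = 1)) ⊆ (s.erase a).erase b := by
            intro k hk
            rw [Finset.mem_filter] at hk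
            have hk2 := hk.2
            rw [hw'val k] at hk2
            by_cases h : k = a ∨ k = b
            · rw [if_pos h] at hk2; exact absurd hk2.symm one_ne_zero
            · push_neg at h
              rw [if_neg (by tauto)] at hk2
              exact Finset.mem_erase.mpr ⟨h.2, Finset.mem_erase.mpr
                ⟨h.1, Finset.mem_filter.mpr ⟨Finset.mem_univ k, hk2⟩⟩⟩
          have hlt : (Finset.univ.filter (fun k => w' k = 1)).card < m := by
            have h1 := Finset.card_le_card hsub
            have h2 : ((s.erase a).erase b).card ≤ s.card - 1 := by
              calc ((s.erase a).erase b).card ≤ (s.erase a).card :=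
                    Finset.card_le_card (Finset.erase_subset _ _)
                _ = s.card - 1 := Finset.card_erase_of_mem ha
            omega
          have hsum' : (∑ k, w' k) = 0 := by
            rw [hw']
            simp only [Pi.add_apply]
            rw [Finset.sum_add_distrib, Finset.sum_add_distrib, hsum,
              Finset.sum_pi_single', Finset.sum_pi_single']
            simp only [Finset.mem_univ, if_true, zero_add]
            decide
          have hw'V : w' ∈ V := ih _ hlt w' rfl hsum'
          have hwfin : w = w' + (Pi.single a 1 + Pi.single b 1) := by
            funext k
            rw [hw']
            simp only [Pi.add_apply]
            have key : ∀ x y z : ZMod 2, x + y + z + (y + z) = x := by decide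
            exact (key _ _ _).symm
          rw [hwfin]
          exact V.add_mem hw'V (pairs a b (Ne.symm hba))
    by_cases hB : ∃ u ∈ V, (∑ k, u k) = 1
    · right; left
      obtain ⟨u, hu, hsu⟩ := hB
      ext x
      simp only [AddSubgroup.mem_top, iff_true]
      rcases zmod2_cases' (∑ k, x k) with h0 | h1
      · exact ker_le x h0
      · have hxu : (∑ k, (x + u) k) = 0 := by
          simp only [Pi.add_apply]
          rw [Finset.sum_add_distrib, h1, hsu]
          decide
        have : x + u ∈ V := ker_le _ hxu
        have h2 : x = (x + u) + u := by
          funext k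
          simp only [Pi.add_apply]
          rw [add_assoc, zmod2_add_self', add_zero]
        rw [h2]
        exact V.add_mem this hu
    · right; right; right
      push_neg at hB
      ext x
      rw [AddMonoidHom.mem_ker, Sapp]
      constructor
      · intro hx
        exact (zmod2_cases' (∑ k, x k)).resolve_right (hB x hx)
      · exact ker_le x
  · push_neg at hA
    by_cases heV : e ∈ V
    · right; right; left
      ext x
      constructor
      · intro hx
        rcases eq_or_ne x 0 with h0 | h0
        · rw [h0]; exact zero_mem _
        · rw [hA x hx h0]
          exact AddSubgroup.subset_closure rfl
      · intro hx
        have : AddSubgroup.closure {(fun _ => 1 : Fin n → ZMod 2)} ≤ V := by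
          rw [AddSubgroup.closure_le, Set.singleton_subset_iff]
          exact heV
        exact this hx
    · left
      ext x
      rw [AddSubgroup.mem_bot]
      constructor
      · intro hx
        by_contra h0
        exact heV ((hA x hx h0) ▸ hx)
      · intro h; rw [h]; exact V.zero_mem
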